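/- Let φ : X → ℝ ∪ {+∞} be a proper convex function on a normed space X and x̄ ∈ dom φ. Then x̄ is a global sharp minimizer of φ (i.e. there exists ζ > 0 with φ(x) ≥ φ(x̄) + ζ‖x − x̄‖ for all x ∈ X, equivalently gr↓φ(x̄) > 0) if and only if 0 belongs to the interior of the convex subdifferential ∂φ(x̄) in the dual space X*. Moreover, gr↓φ(x̄) = sup{ρ > 0 : ρB* ⊆ ∂φ(x̄)}, where B* is the closed unit ball of X*. -/

import Mathlib

open Filter Topology Metric Set

set_option synthInstance.maxHeartbeats 1000000
set_option maxHeartbeats 1000000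

/-- The steepest descent rate of an extended-real-valued function `φ` at `xb`:
`liminf_{x → xb, x ≠ xb} (φ x − φ xb)/‖x − xb‖`. -/
noncomputable def steepestDescentRate {X : Type*} [NormedAddCommGroup X]
    (φ : X → EReal) (xb : X) : EReal :=
  Filter.liminf (fun x => (φ x - φ xb) * ((‖x - xb‖⁻¹ : ℝ) : EReal)) (𝓝[≠] xb)

/-- The convex subdifferential of an extended-real-valued function `φ` at `xb`,
a subset of the continuous dual of `X`. -/
def convexSubdiff {X : Type*} [NormedAddCommGroup X] [NormedSpace ℝ X]
    (φ : X → EReal) (xb : X) : Set (StrongDual ℝ X) :=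
  {p | ∀ x : X, φ xb + ((p (x - xb) : ℝ) : EReal) ≤ φ x}

lemma quot_ge_aux {r ρ c : ℝ} {a : EReal} (ha : a ≠ ⊥) (hc : 0 < c)
    (h : (r : EReal) + ((ρ * c : ℝ) : EReal) ≤ a) :
    (ρ : EReal) ≤ (a - (r : EReal)) * ((c⁻¹ : ℝ) : EReal) := by
  induction a using EReal.rec with
  | bot => exact absurd rfl ha
  | coe s =>
      rw [← EReal.coe_add, EReal.coe_le_coe_iff] at h
      rw [← EReal.coe_sub, ← EReal.coe_mul, EReal.coe_le_coe_iff,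
        ← div_eq_mul_inv, le_div_iff₀ hc]
      linarith
  | top =>
      rw [EReal.top_sub_coe, EReal.top_mul_of_pos]
      · exact le_top
      · exact_mod_cast inv_pos.2 hc

lemma sharp_of_quot_aux {r ρ c : ℝ} (hc : 0 < c) {a : EReal}
    (h : (ρ : EReal) ≤ (a - (r : EReal)) * ((c⁻¹ : ℝ) : EReal)) :
    (r : EReal) + ((ρ * c : ℝ) : EReal) ≤ a := by
  induction a using EReal.rec with
  | bot =>
      rw [EReal.bot_sub] at h
      simp only [EReal.bot_mul_coe_of_pos (by positivity : (0:ℝ) < c⁻¹)] at h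
      exact absurd h (by simp)
  | coe s =>
      rw [← EReal.coe_sub, ← EReal.coe_mul, EReal.coe_le_coe_iff,
        ← div_eq_mul_inv, le_div_iff₀ hc] at h
      rw [← EReal.coe_add, EReal.coe_le_coe_iff]
      linarith
  | top => exact le_top

/-- Let `φ` be a proper convex function (ℝ ∪ {+∞}-valued) on a normed
space and `xb ∈ dom φ`. Then `xb` is a global sharp minimizer of `φ` iff
`0 ∈ int ∂φ(xb)`; moreover, in this case the steepest descent rate of `φ` at `xb` equals
`sup{ρ > 0 : ρ·B* ⊆ ∂φ(xb)}`. -/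
theorem sharp_min_iff_zero_mem_int_subdiff {X : Type*}
    [NormedAddCommGroup X] [NormedSpace ℝ X] (φ : X → EReal) (xb : X)
    (hconv : ∀ x₁ x₂ : X, ∀ t : ℝ, 0 ≤ t → t ≤ 1 →
      φ (t • x₁ + (1 - t) • x₂) ≤ ((t : ℝ) : EReal) * φ x₁ + ((1 - t : ℝ) : EReal) * φ x₂)
    (hnbot : ∀ x, φ x ≠ ⊥) (hdom : φ xb ≠ ⊤) :
    ((∃ ζ : ℝ, 0 < ζ ∧ ∀ x : X, φ xb + ((ζ * ‖x - xb‖ : ℝ) : EReal) ≤ φ x) ↔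
      (0 : StrongDual ℝ X) ∈ interior (convexSubdiff φ xb)) ∧
    ((0 : StrongDual ℝ X) ∈ interior (convexSubdiff φ xb) →
      steepestDescentRate φ xb =
        sSup ((fun ρ : ℝ => (ρ : EReal)) ''
          {ρ : ℝ | 0 < ρ ∧ ∀ p : StrongDual ℝ X, ‖p‖ ≤ ρ →
            p ∈ convexSubdiff φ xb})) := by
  obtain ⟨r, hr⟩ : ∃ r : ℝ, φ xb = (r : EReal) :=
    ⟨(φ xb).toReal, (EReal.coe_toReal hdom (hnbot xb)).symm⟩
  -- From a sharp-minimum inequality with slope ζ, any functional of norm ≤ ζ is in ∂φ(xb).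
  have hsub : ∀ ζ : ℝ, (∀ x : X, φ xb + ((ζ * ‖x - xb‖ : ℝ) : EReal) ≤ φ x) →
      ∀ p : StrongDual ℝ X, ‖p‖ ≤ ζ → p ∈ convexSubdiff φ xb := by
    intro ζ hsharp p hp x
    have h1 : (p (x - xb) : ℝ) ≤ ζ * ‖x - xb‖ := by
      calc (p (x - xb) : ℝ) ≤ ‖p (x - xb)‖ := le_abs_self _
        _ ≤ ‖p‖ * ‖x - xb‖ := p.le_opNorm _
        _ ≤ ζ * ‖x - xb‖ := mul_le_mul_of_nonneg_right hp (norm_nonneg _)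
    calc φ xb + ((p (x - xb) : ℝ) : EReal)
        ≤ φ xb + ((ζ * ‖x - xb‖ : ℝ) : EReal) := by
          exact add_le_add_right (EReal.coe_le_coe_iff.2 h1) _
      _ ≤ φ x := hsharp x
  -- From a ball of functionals in ∂φ(xb), get the sharp-minimum inequality.
  have hsharp_of_ball : ∀ ρ : ℝ, 0 < ρ →
      (∀ p : StrongDual ℝ X, ‖p‖ ≤ ρ → p ∈ convexSubdiff φ xb) →
      ∀ x : X, φ xb + ((ρ * ‖x - xb‖ : ℝ) : EReal) ≤ φ x := by
    intro ρ hρ hball x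
    by_cases hx : x = xb
    · subst hx
      simp [hr]
    · have hv : x - xb ≠ 0 := sub_ne_zero.2 hx
      obtain ⟨f, hf1, hfv⟩ := exists_dual_vector ℝ (x - xb) (norm_ne_zero_iff.2 hv)
      have hnp : ‖ρ • f‖ ≤ ρ := by
        refine (norm_smul_le ρ f).trans ?_
        rw [hf1, mul_one, Real.norm_eq_abs, abs_of_pos hρ]
      have := hball (ρ • f) hnp x
      have hval : ((ρ • f) (x - xb) : ℝ) = ρ * ‖x - xb‖ := by
        simp [hfv]
      rwa [hval] at this
  -- Local sharpness upgrades to global sharpness by convexity.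
  have hglobal : ∀ ρ : ℝ, 0 < ρ → ∀ δ : ℝ, 0 < δ →
      (∀ x : X, x ≠ xb → ‖x - xb‖ < δ → φ xb + ((ρ * ‖x - xb‖ : ℝ) : EReal) ≤ φ x) →
      ∀ x : X, φ xb + ((ρ * ‖x - xb‖ : ℝ) : EReal) ≤ φ x := by
    intro ρ hρ δ hδ hloc x
    by_cases hx : x = xb
    · subst hx; simp [hr]
    by_cases hxδ : ‖x - xb‖ < δ
    · exact hloc x hx hxδ
    push_neg at hxδ
    set c := ‖x - xb‖ with hc
    have hcpos : 0 < c := norm_pos_iff.2 (sub_ne_zero.2 hx)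
    set t := δ / (2 * c) with ht
    have htpos : 0 < t := by positivity
    have ht1 : t ≤ 1 := by
      rw [ht, div_le_one (by positivity)]
      linarith
    set y := t • x + (1 - t) • xb with hy
    have hyx : y - xb = t • (x - xb) := by
      rw [hy, smul_sub]
      module
    have hyn : ‖y - xb‖ = t * c := by
      rw [hyx, norm_smul, Real.norm_eq_abs, abs_of_pos htpos]
    have hyne : y ≠ xb := by
      have hpos : 0 < ‖y - xb‖ := by rw [hyn]; positivity
      exact fun h => by simp [h] at hpos
    have htc : t * c = δ / 2 := by
      rw [ht]; field_simp
    have hylt : ‖y - xb‖ < δ := by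
      rw [hyn, htc]; linarith
    have h1 := hloc y hyne hylt
    have h2 := hconv x xb t (le_of_lt htpos) ht1
    rw [← hy] at h2
    -- now case on φ x
    by_cases htopx : φ x = ⊤
    · rw [htopx]; exact le_top
    · obtain ⟨s, hφx⟩ : ∃ s : ℝ, φ x = (s : EReal) :=
        ⟨(φ x).toReal, (EReal.coe_toReal htopx (hnbot x)).symm⟩
      rw [hφx, hr] at h2
      rw [hr, hyn, htc] at h1
      rw [← EReal.coe_mul, ← EReal.coe_mul, ← EReal.coe_add] at h2
      have h2' : (φ y : EReal) ≤ ((t * s + (1 - t) * r : ℝ) : EReal) := h2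
      have h1' : ((r + ρ * (δ / 2) : ℝ) : EReal) ≤ φ y := by
        rw [EReal.coe_add]; exact h1
      have key : (r + ρ * (δ / 2) : ℝ) ≤ t * s + (1 - t) * r := by
        exact_mod_cast h1'.trans h2'
      rw [hφx, hr, ← EReal.coe_add, EReal.coe_le_coe_iff]
      have h3 : t * (r + ρ * c) ≤ t * s := by nlinarith [htc]
      have := le_of_mul_le_mul_left h3 htpos
      linarith
  constructor
  · constructor
    · rintro ⟨ζ, hζ, hsharp⟩
      refine mem_interior_iff_mem_nhds.2 (Filter.mem_of_superset (Metric.ball_mem_nhds 0 hζ) ?_)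
      intro p hp
      rw [mem_ball_zero_iff] at hp
      exact hsub ζ hsharp p hp.le
    · intro h
      obtain ⟨ε, hε, hball⟩ := Metric.mem_nhds_iff.1 (mem_interior_iff_mem_nhds.1 h)
      refine ⟨ε / 2, by positivity, hsharp_of_ball (ε / 2) (by positivity) ?_⟩
      intro p hp
      apply hball
      rw [mem_ball_zero_iff]
      linarith
  · intro h0
    obtain ⟨ε, hε, hball⟩ := Metric.mem_nhds_iff.1 (mem_interior_iff_mem_nhds.1 h0)
    have hζmem : (ε / 2 : ℝ) ∈ {ρ : ℝ | 0 < ρ ∧ ∀ p : StrongDual ℝ X, ‖p‖ ≤ ρ →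
        p ∈ convexSubdiff φ xb} := by
      refine ⟨by positivity, fun p hp => hball ?_⟩
      rw [mem_ball_zero_iff]; linarith
    set S := {ρ : ℝ | 0 < ρ ∧ ∀ p : StrongDual ℝ X, ‖p‖ ≤ ρ →
        p ∈ convexSubdiff φ xb} with hS
    set M := sSup ((fun ρ : ℝ => (ρ : EReal)) '' S) with hM
    have hζM : ((ε / 2 : ℝ) : EReal) ≤ M := le_sSup ⟨ε / 2, hζmem, rfl⟩
    have hMpos : (0 : EReal) < M :=
      lt_of_lt_of_le (by exact_mod_cast (by positivity : (0:ℝ) < ε / 2)) hζM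
    refine le_antisymm ?_ ?_
    · -- liminf ≤ M
      by_contra hcon
      push_neg at hcon
      obtain ⟨ρ', hMρ', hρ'L⟩ := EReal.exists_between_coe_real hcon
      have hρ'pos : 0 < ρ' := by
        exact_mod_cast hMpos.trans hMρ'
      have hev := eventually_lt_of_lt_liminf hρ'L
      obtain ⟨δ, hδ, hsubset⟩ := Metric.mem_nhdsWithin_iff.1 hev
      have hloc : ∀ x : X, x ≠ xb → ‖x - xb‖ < δ →
          φ xb + ((ρ' * ‖x - xb‖ : ℝ) : EReal) ≤ φ x := by
        intro x hx hxδ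
        have hxmem : x ∈ ball xb δ ∩ {xb}ᶜ := by
          constructor
          · rw [mem_ball, dist_eq_norm]; exact hxδ
          · exact hx
        have := hsubset hxmem
        rw [Set.mem_setOf_eq] at this
        rw [hr]
        exact sharp_of_quot_aux (norm_pos_iff.2 (sub_ne_zero.2 hx)) (by rw [← hr]; exact this.le)
      have hρ'S : ρ' ∈ S := ⟨hρ'pos, hsub ρ' (hglobal ρ' hρ'pos δ hδ hloc)⟩
      have : ((ρ' : ℝ) : EReal) ≤ M := le_sSup ⟨ρ', hρ'S, rfl⟩
      exact absurd (hMρ'.trans_le this) (lt_irrefl _)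
    · -- M ≤ liminf
      refine sSup_le ?_
      rintro _ ⟨ρ, hρS, rfl⟩
      refine le_liminf_of_le (by isBoundedDefault) ?_
      have hsharp := hsharp_of_ball ρ hρS.1 hρS.2
      filter_upwards [eventually_mem_nhdsWithin] with x hx
      have hx' : x ≠ xb := hx
      rw [hr]
      exact quot_ge_aux (hnbot x) (norm_pos_iff.2 (sub_ne_zero.2 hx')) (by rw [← hr]; exact hsharp x)
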